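/- Let R → S be a homomorphism of commutative Noetherian rings of prime characteristic p such that R_red and S_red are F-finite. Let M be an S-module and L an R-module. Then Σ_{e ≥ 0} Σ_{φ} φ( ^e(M_{*S}) ) ⊆ L_{*R}, where for each e the inner sum ranges over all R-linear maps φ : ^eM → L (with ^eM formed over S and regarded as an R-module via R → S). -/

import Mathlib

open scoped TensorProduct Pointwise

universe u v w

/-- `R°`: the set of elements of `R` not contained in any minimal prime. -/
def RCirc (R : Type u) [CommRing R] : Set R :=
  {c | ∀ P ∈ minimalPrimes R, c ∉ P}

/-- An additive map `g : M →+ N` between `R`-modules is `e`-th Frobenius semilinear if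
`g (r ^ (p ^ e) • x) = r • g x`; these are exactly the `R`-linear maps `{}^e M → N`. -/
def IsFrobSemilinear (p e : ℕ) (R : Type u) [CommRing R] {M : Type v} {N : Type w}
    [AddCommGroup M] [Module R M] [AddCommGroup N] [Module R N] (g : M →+ N) : Prop :=
  ∀ (r : R) (x : M), g ((r ^ p ^ e) • x) = r • g x

/-- `M_*[c, p^{e₀}]`: the submodule generated by all `g ({}^e c)` for `e ≥ e₀` and
`g ∈ Hom_R({}^e R, M)`. -/
def tiAux (p : ℕ) (R : Type u) [CommRing R] (M : Type v) [AddCommGroup M] [Module R M]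
    (c : R) (e₀ : ℕ) : Submodule R M :=
  Submodule.span R {x : M | ∃ e : ℕ, e₀ ≤ e ∧ ∃ g : R →+ M, IsFrobSemilinear p e R g ∧ x = g c}

/-- The tight interior `M_{*R}`. -/
def tightInterior (p : ℕ) (R : Type u) [CommRing R] (M : Type v) [AddCommGroup M]
    [Module R M] : Submodule R M :=
  ⨅ c ∈ RCirc R, ⨅ e₀ : ℕ, tiAux p R M c e₀

/-- `R` is `F`-finite: `{}^1 R` is a finitely generated `R`-module. -/
def FFinite (p : ℕ) (R : Type u) [CommRing R] : Prop :=
  ∃ s : Finset R, ∀ x : R, ∃ c : R → R, x = ∑ y ∈ s, c y ^ p * y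

/-- `c` is a co-test element: `c ∈ R°` and `M_* = M_*[c, 1]` for every `R`-module `M`. -/
def IsCoTestElement (p : ℕ) (R : Type u) [CommRing R] (c : R) : Prop :=
  c ∈ RCirc R ∧
    ∀ (M : Type v) [AddCommGroup M] [Module R M], tightInterior p R M = tiAux p R M c 0

/-- Strong `F`-regularity: for every `c ∈ R°` some `R`-linear `φ : {}^e R → R` sends `{}^e c`
to `1`. -/
def StronglyFRegular (p : ℕ) (R : Type u) [CommRing R] : Prop :=
  ∀ c ∈ RCirc R, ∃ (e : ℕ) (g : R →+ R), IsFrobSemilinear p e R g ∧ g c = 1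

/-- `R` is `F`-coregular if `M_* = M` for every `R`-module `M`. -/
def FCoregular (p : ℕ) (R : Type u) [CommRing R] : Prop :=
  ∀ (M : Type v) [AddCommGroup M] [Module R M], tightInterior p R M = ⊤

/-- `{}^e R`: the ring `R` viewed as an `R`-module via the `e`-th iterate of Frobenius. -/
def FrobAlg (_p _e : ℕ) (R : Type u) : Type u := R

instance (p e : ℕ) (R : Type u) [CommRing R] : AddCommGroup (FrobAlg p e R) :=
  inferInstanceAs (AddCommGroup R)

noncomputable instance (p e : ℕ) (R : Type u) [CommRing R] [ExpChar R p] :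
    Module R (FrobAlg p e R) :=
  Module.compHom R (iterateFrobenius R p e)

/-- The tight closure of zero in `N`: those `z` such that for some `c ∈ R°`,
`{}^e c ⊗ z = 0` in `{}^e R ⊗_R N` for all `e ≥ 0`. -/
def zeroTC (p : ℕ) (R : Type u) [CommRing R] [Fact p.Prime] [CharP R p]
    (N : Type v) [AddCommGroup N] [Module R N] : Set N :=
  {z | ∃ c ∈ RCirc R, ∀ e : ℕ,
    ((show FrobAlg p e R from c) ⊗ₜ[R] z : TensorProduct R (FrobAlg p e R) N) = 0}

/-- The big test ideal `τ_b(R) = ⋂_N Ann_R (0*_N)`. -/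
def bigTestIdeal (p : ℕ) (R : Type u) [CommRing R] [Fact p.Prime] [CharP R p] : Set R :=
  {r | ∀ (N : Type v) [AddCommGroup N] [Module R N], ∀ z ∈ zeroTC p R N, r • z = 0}

/-- `Hom_R(S, M)` is an `S`-module via the action of `S` on the source:
`(s • f) x = f (s * x)`. -/
instance homSourceModule (R : Type u) [CommRing R] (S : Type v) [CommRing S] [Algebra R S]
    (M : Type w) [AddCommGroup M] [Module R M] : Module S (S →ₗ[R] M) where
  smul s f := f ∘ₗ LinearMap.mulLeft R s
  one_smul f := LinearMap.ext fun x => show f (1 * x) = f x by rw [one_mul]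
  mul_smul s t f := LinearMap.ext fun x =>
    show f (s * t * x) = f (t * (s * x)) by rw [show s * t * x = t * (s * x) by ring]
  smul_zero s := rfl
  smul_add s f g := rfl
  add_smul s t f := LinearMap.ext fun x =>
    show f ((s + t) * x) = f (s * x) + f (t * x) by rw [add_mul, map_add]
  zero_smul f := LinearMap.ext fun x => show f (0 * x) = 0 by rw [zero_mul, map_zero]

@[simp] lemma homSourceModule_smul_apply {R : Type u} [CommRing R] {S : Type v} [CommRing S]
    [Algebra R S] {M : Type w} [AddCommGroup M] [Module R M] (s : S) (f : S →ₗ[R] M) (x : S) :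
    (s • f) x = f (s * x) := rfl

/-- Post-composition `Hom_R(S, V) → Hom_R(S, W)` with an `R`-linear map `β : V → W`,
as an `S`-linear map for the source `S`-actions. -/
def homComp (R : Type u) [CommRing R] (S : Type v) [CommRing S] [Algebra R S]
    {V : Type*} {W : Type*} [AddCommGroup V] [Module R V] [AddCommGroup W] [Module R W]
    (β : V →ₗ[R] W) : (S →ₗ[R] V) →ₗ[S] (S →ₗ[R] W) where
  toFun f := β ∘ₗ f
  map_add' f g := LinearMap.ext fun x => by simp
  map_smul' s f := rfl

/-- `{}^e M`: the module `M` with `R`-action twisted by the `e`-th iterate of Frobenius. -/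
def FrobM (_p _e : ℕ) (R : Type u) (M : Type v) : Type v := M

instance (p e : ℕ) (R : Type u) (M : Type v) [AddCommGroup M] :
    AddCommGroup (FrobM p e R M) :=
  inferInstanceAs (AddCommGroup M)

noncomputable instance (p e : ℕ) (R : Type u) (M : Type v) [CommRing R] [ExpChar R p]
    [AddCommGroup M] [Module R M] : Module R (FrobM p e R M) :=
  Module.compHom M (iterateFrobenius R p e)

/-- For `R → S` and an `S`-module `M`, an additive map `g : M →+ L` to an `R`-module `L` is
`R`-linear as a map `{}^e M → L` (with `{}^e M` formed over `S` and restricted to `R`) iff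
`g (((algebraMap R S) r) ^ (p ^ e) • x) = r • g x`. -/
def IsFrobSemilinearAlg (p e : ℕ) (R : Type u) (S : Type v) [CommRing R] [CommRing S]
    [Algebra R S] (M : Type w) (L : Type*) [AddCommGroup M] [Module S M]
    [AddCommGroup L] [Module R L] (g : M →+ L) : Prop :=
  ∀ (r : R) (x : M), g ((algebraMap R S r ^ p ^ e) • x) = r • g x

/-- The natural map `S ⊗_R {}^e R → {}^e S`, `s ⊗ {}^e r ↦ {}^e (s^{p^e} · rS)`, on underlying
additive groups. -/
noncomputable def frobBC (p e : ℕ) (R : Type u) (S : Type v) [CommRing R] [CommRing S]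
    [Algebra R S] [Fact p.Prime] [CharP R p] [CharP S p] :
    TensorProduct R S (FrobAlg p e R) →+ S :=
  TensorProduct.liftAddHom
    { toFun := fun s =>
        { toFun := fun r => s ^ p ^ e * algebraMap R S r
          map_zero' := by
            show s ^ p ^ e * algebraMap R S (0 : R) = 0
            simp
          map_add' := fun a b => by
            show s ^ p ^ e * algebraMap R S (a + b) = _
            exact (congrArg (s ^ p ^ e * ·) (map_add (algebraMap R S) (a : R) (b : R))).trans
              (mul_add _ _ _) }
      map_zero' := by
        ext r
        show (0 : S) ^ p ^ e * algebraMap R S r = 0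
        rw [zero_pow (pow_ne_zero e (Fact.out : p.Prime).ne_zero), zero_mul]
      map_add' := fun s t => by
        ext r
        show (s + t) ^ p ^ e * algebraMap R S r = _
        rw [add_pow_char_pow, add_mul]
        rfl }
    (fun r s x => by
      show (r • s) ^ p ^ e * algebraMap R S (show R from x)
          = s ^ p ^ e * algebraMap R S (r ^ p ^ e * (show R from x))
      rw [Algebra.smul_def, mul_pow, map_mul, map_pow]
      ring)

namespace ITUE

section Bidegree

variable (p : ℕ) (R : Type u) (S : Type v) [CommRing R] [CommRing S] [Algebra R S]

/-- An additive map `ψ : R → S` is of bidegree `(Λ, E)` if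
`ψ (r' ^ (p^Λ) * r) = (algebraMap R S r') ^ (p^E) * ψ r`. -/
def IsBidegree (Λ E : ℕ) (ψ : R → S) : Prop :=
  ∀ r' r : R, ψ (r' ^ p ^ Λ * r) = algebraMap R S r' ^ p ^ E * ψ r

variable {p R S}

lemma IsBidegree.shift {Λ E : ℕ} {ψ : R → S} (h : IsBidegree p R S Λ E ψ) (t : ℕ) :
    IsBidegree p R S (Λ + t) (E + t) ψ := by
  intro r' r
  have h1 : r' ^ p ^ (Λ + t) * r = (r' ^ p ^ t) ^ p ^ Λ * r := by
    rw [← pow_mul, ← pow_add, Nat.add_comm t Λ]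
  rw [h1, h (r' ^ p ^ t) r, map_pow, ← pow_mul, ← pow_add, Nat.add_comm t E]

lemma IsBidegree.frobShift {Λ E : ℕ} {ψ : R → S} (h : IsBidegree p R S Λ E ψ) (t : ℕ) :
    IsBidegree p R S Λ (E + t) (fun r => ψ r ^ p ^ t) := by
  intro r' r
  simp only
  rw [h r' r, mul_pow, ← pow_mul, ← pow_add]

lemma IsBidegree.mulLeft {Λ E : ℕ} {ψ : R → S} (h : IsBidegree p R S Λ E ψ) (u : S) :
    IsBidegree p R S Λ E (fun r => u * ψ r) := by
  intro r' r
  simp only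
  rw [h r' r]
  ring

end Bidegree

section FGen

variable (p : ℕ) (R : Type u) [CommRing R]

/-- `R` is generated by finitely many elements over its subring of `p^Λ`-th powers. -/
def FGen (Λ : ℕ) : Prop :=
  ∃ (ι : Type u) (_ : Fintype ι) (b : ι → R),
    ∀ x : R, ∃ cf : ι → R, x = ∑ j, cf j ^ p ^ Λ * b j

variable {p R}

lemma fgen_zero : FGen p R 0 := by
  refine ⟨PUnit, inferInstance, fun _ => 1, fun x => ⟨fun _ => x, ?_⟩⟩
  simp

lemma FGen.succ [Fact p.Prime] [CharP R p] (h1 : FGen p R 1) {Λ : ℕ} (hΛ : FGen p R Λ) :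
    FGen p R (Λ + 1) := by
  obtain ⟨ι₁, _, y, hy⟩ := h1
  obtain ⟨ι, _, b, hb⟩ := hΛ
  refine ⟨ι₁ × ι, inferInstance, fun ji => y ji.1 ^ p ^ Λ * b ji.2, fun x => ?_⟩
  obtain ⟨cf, hcf⟩ := hb x
  choose d hd using fun j => hy (cf j)
  refine ⟨fun ji => d ji.2 ji.1, ?_⟩
  calc x = ∑ j, cf j ^ p ^ Λ * b j := hcf
    _ = ∑ j, ∑ i, d j i ^ p ^ (Λ + 1) * (y i ^ p ^ Λ * b j) := by
        refine Finset.sum_congr rfl fun j _ => ?_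
        rw [hd j, pow_one]
        have hfr : (∑ i, d j i ^ p * y i) ^ p ^ Λ = ∑ i, (d j i ^ p * y i) ^ p ^ Λ := by
          rw [← iterateFrobenius_def (R := R) (p := p) (n := Λ), map_sum]
          simp only [iterateFrobenius_def]
        rw [hfr, Finset.sum_mul]
        refine Finset.sum_congr rfl fun i _ => ?_
        rw [mul_pow, ← pow_mul, ← pow_succ']
        ring
    _ = ∑ ji : ι₁ × ι, d ji.2 ji.1 ^ p ^ (Λ + 1) * (y ji.1 ^ p ^ Λ * b ji.2) := by
        rw [Fintype.sum_prod_type]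
        exact Finset.sum_comm
  
lemma fgen_all [Fact p.Prime] [CharP R p] (h1 : FGen p R 1) : ∀ Λ, FGen p R Λ := by
  intro Λ
  induction Λ with
  | zero => exact fgen_zero
  | succ Λ ih => exact h1.succ ih

end FGen

section FFiniteLift

variable {p : ℕ} {R : Type u} [CommRing R]

lemma fgen_one_of_ffinite [Fact p.Prime] [CharP R p] [IsNoetherianRing R]
    (h : FFinite p (R ⧸ nilradical R)) : FGen p R 1 := by
  classical
  obtain ⟨s, hs⟩ := h
  choose w hw using fun y : R ⧸ nilradical R =>
    Ideal.Quotient.mk_surjective (I := nilradical R) y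
  have base : ∀ x : R, ∃ cf : {y // y ∈ s} → R,
      x - ∑ y : {y // y ∈ s}, cf y ^ p * w y.1 ∈ nilradical R := by
    intro x
    obtain ⟨c, hc⟩ := hs (Ideal.Quotient.mk _ x)
    refine ⟨fun y => w (c y.1), ?_⟩
    rw [← Ideal.Quotient.eq_zero_iff_mem, map_sub, map_sum]
    have h1 : ∀ y : {y // y ∈ s},
        Ideal.Quotient.mk (nilradical R) (w (c y.1) ^ p * w y.1) = c y.1 ^ p * y.1 := by
      intro y; rw [map_mul, map_pow, hw, hw]
    rw [Finset.sum_congr rfl fun y _ => h1 y]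
    rw [Finset.sum_coe_sort s (fun y => c y ^ p * y)]
    rw [← hc, sub_self]
  have main : ∀ k : ℕ, ∃ (ι : Type u) (_ : Fintype ι) (b : ι → R),
      ∀ x : R, ∃ cf : ι → R, x - ∑ j, cf j ^ p * b j ∈ nilradical R ^ k := by
    intro k
    induction k with
    | zero =>
      refine ⟨PUnit, inferInstance, fun _ => 0, fun x => ⟨fun _ => 0, ?_⟩⟩
      simp [Ideal.one_eq_top]
    | succ k ih =>
      obtain ⟨ι, _, b, hb⟩ := ih
      obtain ⟨G, hG⟩ := IsNoetherian.noetherian (nilradical R ^ k)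
      refine ⟨ι ⊕ ({y // y ∈ G} × {y // y ∈ s}), inferInstance,
        Sum.elim b (fun z => w z.2.1 * z.1.1), fun x => ?_⟩
      obtain ⟨cf, hcf⟩ := hb x
      set ν := x - ∑ j, cf j ^ p * b j with hν
      have hν' : ν ∈ Submodule.span R (G : Set R) := by rw [hG]; exact hcf
      obtain ⟨f, -, hf⟩ := Submodule.mem_span_finset.mp hν'
      choose cf' hcf' using fun y : {y // y ∈ G} => base (f y.1)
      refine ⟨Sum.elim cf (fun z => cf' z.1 z.2), ?_⟩
      have key : x - ∑ j, (Sum.elim cf (fun z : {y // y ∈ G} × {y // y ∈ s} => cf' z.1 z.2)) j ^ p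
            * (Sum.elim b (fun z : {y // y ∈ G} × {y // y ∈ s} => w z.2.1 * z.1.1)) j
          = ∑ y : {y // y ∈ G}, (f y.1 - ∑ i : {y // y ∈ s}, cf' y i ^ p * w i.1) * y.1 := by
        rw [Fintype.sum_sum_type]
        simp only [Sum.elim_inl, Sum.elim_inr]
        rw [Fintype.sum_prod_type]
        have hsub : ∀ y : {y // y ∈ G}, (f y.1 - ∑ i : {y // y ∈ s}, cf' y i ^ p * w i.1) * y.1
            = f y.1 * y.1 - ∑ i : {y // y ∈ s}, cf' y i ^ p * (w i.1 * y.1) := by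
          intro y
          rw [sub_mul, Finset.sum_mul]
          congr 1
          exact Finset.sum_congr rfl fun i _ => by ring
        rw [Finset.sum_congr rfl fun y _ => hsub y, Finset.sum_sub_distrib]
        have hfy : ∑ y : {y // y ∈ G}, f y.1 * y.1 = ν := by
          rw [← hf, Finset.sum_coe_sort G (fun y => f y * y)]
          exact Finset.sum_congr rfl fun i _ => (smul_eq_mul _ _).symm
        rw [hfy, hν]
        ring
      rw [key]
      refine Submodule.sum_mem _ fun y _ => ?_
      rw [pow_succ']
      exact Ideal.mul_mem_mul (hcf' y) (by rw [← hG]; exact Submodule.subset_span y.2)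
  obtain ⟨n, hn⟩ := IsNoetherianRing.isNilpotent_nilradical R
  obtain ⟨ι, hfin, b, hb⟩ := main n
  refine ⟨ι, hfin, b, fun x => ?_⟩
  obtain ⟨cf, hcf⟩ := hb x
  rw [hn, Submodule.zero_eq_bot, Submodule.mem_bot, sub_eq_zero] at hcf
  exact ⟨cf, by simpa [pow_one] using hcf⟩

end FFiniteLift

section Chi

variable {p : ℕ} [Fact p.Prime] {R : Type u} {S : Type v} [CommRing R] [CommRing S] [Algebra R S]
variable [IsNoetherianRing R] [IsNoetherianRing S] [CharP R p] [CharP S p]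


/-- Over a domain `D`, any element of a `D`-module that is not killed by any nonzero scalar
admits a `D`-linear functional to the fraction field taking value `1` on it. -/
lemma exists_functional (D : Type*) [CommRing D] [IsDomain D] (A : Type*) [AddCommGroup A]
    [Module D A] (ω : A) (hω : ∀ d : D, d ≠ 0 → d • ω ≠ 0) :
    ∃ φ : A →ₗ[D] FractionRing D, φ ω = 1 := by
  classical
  set K := FractionRing D
  set Ω := LocalizedModule (nonZeroDivisors D) A with hΩdef
  set mkΩ : A →ₗ[D] Ω := LocalizedModule.mkLinearMap (nonZeroDivisors D) A with hmkΩ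
  have hω' : mkΩ ω ≠ 0 := by
    intro h0
    obtain ⟨s', hs'0⟩ := (IsLocalizedModule.eq_zero_iff (nonZeroDivisors D) mkΩ).mp h0
    exact hω (s' : D) (nonZeroDivisors.ne_zero s'.2) hs'0
  obtain ⟨f, hf1⟩ : ∃ f : Ω →ₗ[K] K, f (mkΩ ω) = 1 := by
    obtain ⟨W', hW'⟩ := Submodule.exists_isCompl (K ∙ (mkΩ ω))
    set e := LinearEquiv.toSpanNonzeroSingleton K Ω (mkΩ ω) hω' with he
    refine ⟨(e.symm : (K ∙ (mkΩ ω)) →ₗ[K] K).comp (Submodule.linearProjOfIsCompl _ _ hW'), ?_⟩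
    have h1 : Submodule.linearProjOfIsCompl _ _ hW' (mkΩ ω)
        = ⟨mkΩ ω, Submodule.mem_span_singleton_self (mkΩ ω)⟩ :=
      Submodule.linearProjOfIsCompl_apply_left hW' ⟨mkΩ ω, Submodule.mem_span_singleton_self _⟩
    have h2 : e 1 = ⟨mkΩ ω, Submodule.mem_span_singleton_self (mkΩ ω)⟩ := by
      rw [he]
      exact LinearEquiv.toSpanNonzeroSingleton_one K Ω (mkΩ ω) hω'
    simp only [LinearMap.comp_apply, h1, ← h2, LinearEquiv.coe_coe, LinearEquiv.symm_apply_apply]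
  exact ⟨(f.restrictScalars D).comp mkΩ, by simpa using hf1⟩

set_option maxHeartbeats 1000000 in
/-- Key construction: a bidegree additive map `R →+ S` whose value at `c ∈ R°` avoids a
given minimal prime `Q` of `S`. -/
lemma exists_chi (hFF : ∀ Λ, FGen p R Λ) {c : R} (hc : c ∈ RCirc R)
    {Q : Ideal S} (hQ : Q ∈ minimalPrimes S) :
    ∃ (Λ E : ℕ) (χ : R →+ S), IsBidegree p R S Λ E (⇑χ) ∧ χ c ∉ Q := by
  classical
  haveI hQp : Q.IsPrime := hQ.1.1
  set 𝔭 : Ideal R := Q.comap (algebraMap R S) with h𝔭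
  haveI h𝔭p : 𝔭.IsPrime := hQp.comap (algebraMap R S)
  set Rp := Localization 𝔭.primeCompl with hRp
  -- `c` is nonzero in the localization at 𝔭
  have hc0 : algebraMap R Rp c ≠ 0 := by
    intro h0
    obtain ⟨m, hm⟩ := (IsLocalization.map_eq_zero_iff 𝔭.primeCompl Rp c).mp h0
    obtain ⟨q, hqmin, hq𝔭⟩ := Ideal.exists_minimalPrimes_le (I := (⊥ : Ideal R)) (J := 𝔭) bot_le
    haveI hqp : q.IsPrime := hqmin.1.1
    have hmc : (m : R) * c ∈ q := by rw [hm]; exact q.zero_mem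
    rcases hqp.mem_or_mem hmc with h | h
    · exact m.2 (hq𝔭 h)
    · exact hc q hqmin h
  haveI : IsNoetherianRing Rp := IsLocalization.isNoetherianRing 𝔭.primeCompl Rp ‹_›
  have hKrull := Ideal.iInf_pow_eq_bot_of_isLocalRing
      (R := Rp) (IsLocalRing.maximalIdeal Rp) (Ideal.IsMaximal.ne_top inferInstance)
  have hex : ∃ n : ℕ, algebraMap R Rp c ∉ IsLocalRing.maximalIdeal Rp ^ n := by
    by_contra hall
    push_neg at hall
    refine hc0 ?_
    rw [← Submodule.mem_bot (R := Rp), ← hKrull]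
    exact Submodule.mem_iInf _ |>.mpr hall
  obtain ⟨n, hn⟩ := hex
  obtain ⟨Λ, hΛn⟩ : ∃ Λ : ℕ, n ≤ p ^ Λ :=
    ⟨n, Nat.le_of_lt (Nat.lt_pow_self (n := n) (Fact.out : p.Prime).one_lt)⟩
  -- the ideal of p^Λ-th powers of 𝔭
  set 𝔞 : Ideal R := Ideal.span ((fun π => π ^ p ^ Λ) '' (𝔭 : Set R)) with h𝔞
  have h𝔞𝔭 : 𝔞 ≤ 𝔭 ^ (p ^ Λ) := by
    rw [h𝔞, Ideal.span_le]
    rintro _ ⟨π, hπ, rfl⟩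
    exact Ideal.pow_mem_pow hπ _
  have hNoTor : ∀ s' : R, s' ∉ 𝔭 → s' ^ p ^ Λ * c ∉ 𝔞 := by
    intro s' hs' hmem
    have h1 : algebraMap R Rp (s' ^ p ^ Λ * c) ∈ (IsLocalRing.maximalIdeal Rp) ^ (p ^ Λ) := by
      have h2 : Ideal.map (algebraMap R Rp) 𝔭 ≤ IsLocalRing.maximalIdeal Rp := by
        rw [Ideal.map_le_iff_le_comap]
        intro π hπ
        rw [Ideal.mem_comap, IsLocalization.AtPrime.to_map_mem_maximal_iff Rp 𝔭 π]
        exact hπ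
      have h3 : algebraMap R Rp (s' ^ p ^ Λ * c) ∈ Ideal.map (algebraMap R Rp) (𝔭 ^ (p ^ Λ)) :=
        Ideal.mem_map_of_mem _ (h𝔞𝔭 hmem)
      rw [Ideal.map_pow] at h3
      exact Ideal.pow_right_mono h2 _ h3
    have hu : IsUnit ((algebraMap R Rp s') ^ p ^ Λ) :=
      (IsLocalization.map_units Rp (⟨s', hs'⟩ : 𝔭.primeCompl)).pow _
    obtain ⟨v, hv⟩ := hu
    have heq : algebraMap R Rp c = ↑v⁻¹ * ((algebraMap R Rp s') ^ p ^ Λ * algebraMap R Rp c) := by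
      rw [← mul_assoc, ← hv, Units.inv_mul, one_mul]
    have h4 : algebraMap R Rp c ∈ (IsLocalRing.maximalIdeal Rp) ^ (p ^ Λ) := by
      rw [heq]
      refine Ideal.mul_mem_left _ _ ?_
      rw [← map_pow, ← map_mul]
      exact h1
    exact hn (Ideal.pow_le_pow_right hΛn h4)
  -- the twisted module structure
  set D := R ⧸ 𝔭 with hD
  set θ : D →+* R ⧸ 𝔞 := Ideal.Quotient.lift 𝔭
    ((Ideal.Quotient.mk 𝔞).comp (iterateFrobenius R p Λ))
    (fun π hπ => by
      show Ideal.Quotient.mk 𝔞 (iterateFrobenius R p Λ π) = 0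
      rw [iterateFrobenius_def]
      exact Ideal.Quotient.eq_zero_iff_mem.mpr (Ideal.subset_span ⟨π, hπ, rfl⟩)) with hθ
  have hθmk : ∀ r : R, θ (Ideal.Quotient.mk 𝔭 r) = Ideal.Quotient.mk 𝔞 (r ^ p ^ Λ) := by
    intro r
    rw [hθ]
    show Ideal.Quotient.mk 𝔞 (iterateFrobenius R p Λ r) = _
    rw [iterateFrobenius_def]
  letI : Module D (R ⧸ 𝔞) := Module.compHom _ θ
  have hsmul : ∀ (d : D) (x : R ⧸ 𝔞), d • x = θ d * x := fun d x => rfl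
  obtain ⟨φ, hφ1⟩ : ∃ φ : (R ⧸ 𝔞) →ₗ[D] FractionRing D, φ (Ideal.Quotient.mk 𝔞 c) = 1 := by
    refine exists_functional D (R ⧸ 𝔞) (Ideal.Quotient.mk 𝔞 c) ?_
    intro d hd h0
    obtain ⟨t, ht⟩ := Ideal.Quotient.mk_surjective (I := 𝔭) d
    have ht𝔭 : t ∉ 𝔭 := by
      intro hmem
      refine hd ?_
      rw [← ht, Ideal.Quotient.eq_zero_iff_mem]
      exact hmem
    have hz : Ideal.Quotient.mk 𝔞 (t ^ p ^ Λ * c) = 0 := by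
      rw [map_mul, ← hθmk, ht, ← hsmul]
      exact h0
    exact hNoTor t ht𝔭 (Ideal.Quotient.eq_zero_iff_mem.mp hz)
  -- the localization of S at Q
  set Sq := Localization Q.primeCompl with hSq
  haveI : IsNoetherianRing Sq := IsLocalization.isNoetherianRing Q.primeCompl Sq ‹_›
  haveI : CharP Sq p := by
    have hp0 : ((p : ℕ) : Sq) = 0 := by
      have : ((p : ℕ) : Sq) = algebraMap S Sq ((p : ℕ) : S) := by rw [map_natCast]
      rw [this, CharP.cast_eq_zero S p, map_zero]
    exact (CharP.charP_iff_prime_eq_zero (Fact.out : p.Prime)).mpr hp0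
  have hprimes : ∀ (J : Ideal Sq), J.IsPrime → J = IsLocalRing.maximalIdeal Sq := by
    intro J hJ
    haveI := hJ
    have hle : J ≤ IsLocalRing.maximalIdeal Sq := IsLocalRing.le_maximalIdeal hJ.ne_top
    have hcm : (IsLocalRing.maximalIdeal Sq).comap (algebraMap S Sq) = Q :=
      Localization.AtPrime.under_maximalIdeal
    have hc1 : J.comap (algebraMap S Sq) ≤ Q := (Ideal.comap_mono (f := algebraMap S Sq) hle).trans hcm.le
    have hc2 : Q ≤ J.comap (algebraMap S Sq) := hQ.2 ⟨hJ.comap _, bot_le⟩ hc1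
    refine le_antisymm hle ?_
    rw [← IsLocalization.map_under Q.primeCompl Sq (IsLocalRing.maximalIdeal Sq),
      ← IsLocalization.map_under Q.primeCompl Sq J]
    exact Ideal.map_mono (hcm.le.trans hc2)
  have hnilrad : nilradical Sq = IsLocalRing.maximalIdeal Sq := by
    rw [nilradical_eq_sInf]
    apply le_antisymm
    · exact sInf_le ((IsLocalRing.maximalIdeal.isMaximal Sq).isPrime)
    · exact le_sInf fun J hJ => (hprimes J hJ).ge
  obtain ⟨N, hN⟩ := IsNoetherianRing.isNilpotent_nilradical Sq
  rw [hnilrad] at hN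
  set E := N with hE
  have hpE : N ≤ p ^ E := Nat.le_of_lt (Nat.lt_pow_self (n := N) (Fact.out : p.Prime).one_lt)
  have hkill : ∀ x : Sq, x ∈ IsLocalRing.maximalIdeal Sq → x ^ p ^ E = 0 := by
    intro x hx
    have hxN : x ^ N = 0 := by
      have h1 := Ideal.pow_mem_pow hx N
      rw [hN] at h1
      simpa using h1
    calc x ^ p ^ E = x ^ N * x ^ (p ^ E - N) := by rw [← pow_add]; congr 1; omega
      _ = 0 := by rw [hxN, zero_mul]
  -- the ring homomorphisms ΘD and ΘK
  set g₀ : R →+* Sq := (iterateFrobenius Sq p E).comp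
    ((algebraMap S Sq).comp (algebraMap R S)) with hg₀
  have hg₀def : ∀ r, g₀ r = (algebraMap S Sq (algebraMap R S r)) ^ p ^ E := by
    intro r
    rw [hg₀]
    simp [iterateFrobenius_def]
  have hg₀kill : ∀ π ∈ 𝔭, g₀ π = 0 := by
    intro π hπ
    rw [hg₀def]
    refine hkill _ ?_
    rw [IsLocalization.AtPrime.to_map_mem_maximal_iff Sq Q]
    exact hπ
  set ΘD : D →+* Sq := Ideal.Quotient.lift 𝔭 g₀ hg₀kill with hΘD
  have hΘDmk : ∀ r, ΘD (Ideal.Quotient.mk 𝔭 r) = g₀ r := fun r => Ideal.Quotient.lift_mk _ _ _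
  have hΘDunit : ∀ y : ↥(nonZeroDivisors D), IsUnit (ΘD y) := by
    intro y
    obtain ⟨t, ht⟩ := Ideal.Quotient.mk_surjective (I := 𝔭) (y : D)
    have ht𝔭 : t ∉ 𝔭 := by
      intro hmem
      refine nonZeroDivisors.ne_zero y.2 ?_
      rw [← ht, Ideal.Quotient.eq_zero_iff_mem]
      exact hmem
    rw [← ht, hΘDmk, hg₀def]
    exact (IsLocalization.map_units Sq (⟨algebraMap R S t, fun h => ht𝔭 (Ideal.mem_comap.mpr h)⟩ : Q.primeCompl)).pow _
  set ΘK : FractionRing D →+* Sq := IsLocalization.lift (M := nonZeroDivisors D) hΘDunit with hΘK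
  have hΘKalg : ∀ d : D, ΘK (algebraMap D (FractionRing D) d) = ΘD d := by
    intro d
    rw [hΘK]
    exact IsLocalization.lift_eq hΘDunit d
  -- generators of R over p^Λ-th powers
  obtain ⟨ι, hι, b, hb⟩ := hFF Λ
  choose rep hrep using hb
  set xt : ι → Sq := fun j => ΘK (φ (Ideal.Quotient.mk 𝔞 (b j))) with hxt
  have hkey : ∀ (u : ι → R), ΘK (φ (Ideal.Quotient.mk 𝔞 (∑ j, u j ^ p ^ Λ * b j)))
      = ∑ j, g₀ (u j) * xt j := by
    intro u
    have h1 : (Ideal.Quotient.mk 𝔞 (∑ j, u j ^ p ^ Λ * b j))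
        = ∑ j, (Ideal.Quotient.mk 𝔭 (u j)) • (Ideal.Quotient.mk 𝔞 (b j)) := by
      rw [map_sum]
      exact Finset.sum_congr rfl fun j _ => by rw [hsmul, hθmk, ← map_mul]
    rw [h1, map_sum, map_sum]
    refine Finset.sum_congr rfl fun j _ => ?_
    rw [map_smul, Algebra.smul_def, map_mul, hΘKalg, hΘDmk]
  -- the relation module
  have hRELadd : ∀ u v : ι → R, (∑ j, u j ^ p ^ Λ * b j = 0) → (∑ j, v j ^ p ^ Λ * b j = 0) →
      (∑ j, (u + v) j ^ p ^ Λ * b j = 0) := by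
    intro u v hu hv
    have h1 : ∀ j, (u + v) j ^ p ^ Λ * b j = u j ^ p ^ Λ * b j + v j ^ p ^ Λ * b j := by
      intro j
      rw [Pi.add_apply, add_pow_char_pow, add_mul]
    rw [Finset.sum_congr rfl fun j _ => h1 j, Finset.sum_add_distrib, hu, hv, add_zero]
  set REL : Submodule R (ι → R) :=
    { carrier := {u | ∑ j, u j ^ p ^ Λ * b j = 0}
      add_mem' := fun hu hv => hRELadd _ _ hu hv
      zero_mem' := by
        simp [zero_pow (pow_ne_zero _ (Fact.out : p.Prime).ne_zero)]
      smul_mem' := by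
        intro r u hu
        simp only [Set.mem_setOf_eq] at hu ⊢
        have h1 : ∀ j, (r • u) j ^ p ^ Λ * b j = r ^ p ^ Λ * (u j ^ p ^ Λ * b j) := by
          intro j
          rw [Pi.smul_apply, smul_eq_mul, mul_pow, mul_assoc]
        rw [Finset.sum_congr rfl fun j _ => h1 j, ← Finset.mul_sum, hu, mul_zero] } with hRELdef
  obtain ⟨V, hV⟩ := IsNoetherian.noetherian REL
  have hcond : ∀ u, u ∈ REL → ∑ j, g₀ (u j) * xt j = 0 := by
    intro u hu
    have h1 := hkey u
    have hu' : ∑ j, u j ^ p ^ Λ * b j = 0 := hu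
    rw [hu'] at h1
    simpa using h1.symm
  have hval : ∑ j, g₀ (rep c j) * xt j = 1 := by
    have h1 := hkey (rep c)
    rw [← hrep c] at h1
    rw [← h1, hφ1, map_one]
  -- clear denominators
  obtain ⟨σ, hσ⟩ := IsLocalization.exist_integer_multiples_of_finite Q.primeCompl xt
  choose y hy using hσ
  have hrel0 : ∀ v : ι → R, v ∈ V →
      ∃ m : ↥Q.primeCompl, (m : S) * ∑ j, (algebraMap R S (v j)) ^ p ^ E * y j = 0 := by
    intro v hv
    have h0 : algebraMap S Sq (∑ j, (algebraMap R S (v j)) ^ p ^ E * y j) = 0 := by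
      rw [map_sum]
      have h1 : ∀ j, algebraMap S Sq ((algebraMap R S (v j)) ^ p ^ E * y j)
          = (σ : S) • (g₀ (v j) * xt j) := by
        intro j
        rw [map_mul, map_pow, hy j, hg₀def, Algebra.smul_def, Algebra.smul_def]
        ring
      rw [Finset.sum_congr rfl fun j _ => h1 j, ← Finset.smul_sum,
          hcond v (by rw [← hV]; exact Submodule.subset_span hv), smul_zero]
    exact (IsLocalization.map_eq_zero_iff Q.primeCompl Sq _).mp h0
  choose mv hmv using hrel0
  set τS : S := ∏ v ∈ V.attach, (mv v.1 v.2 : S) with hτS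
  have hτ : τS ∈ Q.primeCompl := by
    rw [hτS]
    exact Submonoid.prod_mem _ fun v _ => (mv v.1 v.2).2
  set xs : ι → S := fun j => τS * y j with hxs
  -- the relations hold exactly in S
  have hRELcond : ∀ u, u ∈ REL → ∑ j, (algebraMap R S (u j)) ^ p ^ E * xs j = 0 := by
    intro u hu
    rw [← hV] at hu
    induction hu using Submodule.span_induction with
    | mem v hv =>
      have h1 : ∑ j, (algebraMap R S (v j)) ^ p ^ E * xs j
          = τS * ∑ j, (algebraMap R S (v j)) ^ p ^ E * y j := by
        rw [Finset.mul_sum]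
        exact Finset.sum_congr rfl fun j _ => by rw [hxs]; ring
      rw [h1]
      obtain ⟨rest, hrest⟩ : ∃ rest : S, τS = (mv v hv : S) * rest := by
        refine ⟨∏ w ∈ V.attach.erase ⟨v, hv⟩, (mv w.1 w.2 : S), ?_⟩
        rw [hτS, ← Finset.mul_prod_erase _ _ (Finset.mem_attach _ ⟨v, hv⟩)]
      rw [hrest, mul_comm ((mv v hv : S)) rest, mul_assoc, hmv v hv, mul_zero]
    | zero =>
      simp [zero_pow (pow_ne_zero _ (Fact.out : p.Prime).ne_zero)]
    | add u₁ u₂ _ _ h₁ h₂ =>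
      have h3 : ∀ j, (algebraMap R S ((u₁ + u₂) j)) ^ p ^ E * xs j
          = (algebraMap R S (u₁ j)) ^ p ^ E * xs j + (algebraMap R S (u₂ j)) ^ p ^ E * xs j := by
        intro j
        rw [Pi.add_apply, map_add, add_pow_char_pow, add_mul]
      rw [Finset.sum_congr rfl fun j _ => h3 j, Finset.sum_add_distrib, h₁, h₂, add_zero]
    | smul r u₁ _ h₁ =>
      have h3 : ∀ j, (algebraMap R S ((r • u₁) j)) ^ p ^ E * xs j
          = (algebraMap R S r) ^ p ^ E * ((algebraMap R S (u₁ j)) ^ p ^ E * xs j) := by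
        intro j
        rw [Pi.smul_apply, smul_eq_mul, map_mul, mul_pow, mul_assoc]
      rw [Finset.sum_congr rfl fun j _ => h3 j, ← Finset.mul_sum, h₁, mul_zero]
  -- well-definedness
  have hwd : ∀ u u' : ι → R, (∑ j, u j ^ p ^ Λ * b j) = (∑ j, u' j ^ p ^ Λ * b j) →
      ∑ j, (algebraMap R S (u j)) ^ p ^ E * xs j
        = ∑ j, (algebraMap R S (u' j)) ^ p ^ E * xs j := by
    intro u u' h
    have hmem : (u - u') ∈ REL := by
      show ∑ j, (u - u') j ^ p ^ Λ * b j = 0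
      have h1 : ∀ j, (u - u') j ^ p ^ Λ * b j = u j ^ p ^ Λ * b j - u' j ^ p ^ Λ * b j := by
        intro j
        rw [Pi.sub_apply, sub_pow_char_pow, sub_mul]
      rw [Finset.sum_congr rfl fun j _ => h1 j, Finset.sum_sub_distrib, h, sub_self]
    have h2 := hRELcond _ hmem
    have h3 : ∀ j, (algebraMap R S ((u - u') j)) ^ p ^ E * xs j
        = (algebraMap R S (u j)) ^ p ^ E * xs j - (algebraMap R S (u' j)) ^ p ^ E * xs j := by
      intro j
      rw [Pi.sub_apply, map_sub, sub_pow_char_pow, sub_mul]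
    rw [Finset.sum_congr rfl fun j _ => h3 j, Finset.sum_sub_distrib, sub_eq_zero] at h2
    exact h2
  set χfun : R → S := fun r => ∑ j, (algebraMap R S (rep r j)) ^ p ^ E * xs j with hχfun
  have hχadd : ∀ r r', χfun (r + r') = χfun r + χfun r' := by
    intro r r'
    have h1 : (∑ j, (rep (r + r')) j ^ p ^ Λ * b j) = ∑ j, (rep r + rep r') j ^ p ^ Λ * b j := by
      rw [← hrep (r + r')]
      have h2 : ∀ j, (rep r + rep r') j ^ p ^ Λ * b j
          = rep r j ^ p ^ Λ * b j + rep r' j ^ p ^ Λ * b j := by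
        intro j
        rw [Pi.add_apply, add_pow_char_pow, add_mul]
      rw [Finset.sum_congr rfl fun j _ => h2 j, Finset.sum_add_distrib, ← hrep r, ← hrep r']
    have h3 := hwd _ _ h1
    rw [hχfun]
    simp only
    rw [h3]
    have h4 : ∀ j, (algebraMap R S ((rep r + rep r') j)) ^ p ^ E * xs j
        = (algebraMap R S (rep r j)) ^ p ^ E * xs j
          + (algebraMap R S (rep r' j)) ^ p ^ E * xs j := by
      intro j
      rw [Pi.add_apply, map_add, add_pow_char_pow, add_mul]
    rw [Finset.sum_congr rfl fun j _ => h4 j, Finset.sum_add_distrib]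
  have hχbid : IsBidegree p R S Λ E χfun := by
    intro r' r
    have h1 : (∑ j, (rep (r' ^ p ^ Λ * r)) j ^ p ^ Λ * b j)
        = ∑ j, (r' • rep r) j ^ p ^ Λ * b j := by
      rw [← hrep (r' ^ p ^ Λ * r)]
      have h2 : ∀ j, (r' • rep r) j ^ p ^ Λ * b j = r' ^ p ^ Λ * (rep r j ^ p ^ Λ * b j) := by
        intro j
        rw [Pi.smul_apply, smul_eq_mul, mul_pow, mul_assoc]
      rw [Finset.sum_congr rfl fun j _ => h2 j, ← Finset.mul_sum, ← hrep r]
    have h3 := hwd _ _ h1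
    rw [hχfun]
    simp only
    rw [h3]
    have h4 : ∀ j, (algebraMap R S ((r' • rep r) j)) ^ p ^ E * xs j
        = (algebraMap R S r') ^ p ^ E * ((algebraMap R S (rep r j)) ^ p ^ E * xs j) := by
      intro j
      rw [Pi.smul_apply, smul_eq_mul, map_mul, mul_pow, mul_assoc]
    rw [Finset.sum_congr rfl fun j _ => h4 j, ← Finset.mul_sum]
  have hχc : χfun c ∉ Q := by
    intro hmem
    have hloc : algebraMap S Sq (χfun c) = algebraMap S Sq (τS * (σ : S)) := by
      rw [hχfun]
      simp only
      rw [map_sum]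
      have h1 : ∀ j, algebraMap S Sq ((algebraMap R S (rep c j)) ^ p ^ E * xs j)
          = algebraMap S Sq (τS * (σ : S)) * (g₀ (rep c j) * xt j) := by
        intro j
        rw [hxs]
        simp only
        rw [map_mul, map_mul, map_mul, map_pow, hy j, hg₀def, Algebra.smul_def]
        ring
      rw [Finset.sum_congr rfl fun j _ => h1 j, ← Finset.mul_sum, hval, mul_one]
    have hunit : IsUnit (algebraMap S Sq (τS * (σ : S))) :=
      IsLocalization.map_units Sq ⟨τS * (σ : S), Submonoid.mul_mem _ hτ σ.2⟩
    rw [← hloc] at hunit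
    have hmem' : algebraMap S Sq (χfun c) ∈ IsLocalRing.maximalIdeal Sq := by
      rw [IsLocalization.AtPrime.to_map_mem_maximal_iff Sq Q]
      exact hmem
    exact (IsLocalRing.mem_maximalIdeal _).mp hmem' hunit
  exact ⟨Λ, E, AddMonoidHom.mk' χfun hχadd, hχbid, hχc⟩

end Chi

section Psi

variable {p : ℕ} [Fact p.Prime] {R : Type u} {S : Type v} [CommRing R] [CommRing S] [Algebra R S]
variable [IsNoetherianRing R] [IsNoetherianRing S] [CharP R p] [CharP S p]

set_option maxHeartbeats 1000000 in
/-- Key construction: a bidegree additive map `ψ : R →+ S` with `ψ c ∈ S°`,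
of arbitrarily large bidegree. -/
lemma exists_psi (hFF : ∀ Λ, FGen p R Λ) {c : R} (hc : c ∈ RCirc R) (Λ₀ e : ℕ) :
    ∃ (Λ E : ℕ) (ψ : R →+ S), Λ₀ ≤ Λ ∧ e ≤ E ∧ IsBidegree p R S Λ E (⇑ψ) ∧ ψ c ∈ RCirc S := by
  classical
  have hfin : (minimalPrimes S).Finite := minimalPrimes.finite_of_isNoetherianRing S
  set F := hfin.toFinset with hF
  have hchi : ∀ Q : {Q // Q ∈ F}, ∃ (Λ E : ℕ) (χ : R →+ S),
      IsBidegree p R S Λ E (⇑χ) ∧ χ c ∉ Q.1 :=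
    fun Q => exists_chi hFF hc (hfin.mem_toFinset.mp Q.2)
  choose ΛQ EQ χQ hbid hne using hchi
  have hmin : ∀ Q : {Q // Q ∈ F}, Q.1 ∈ minimalPrimes S := fun Q => hfin.mem_toFinset.mp Q.2
  have hprime : ∀ Q : {Q // Q ∈ F}, Q.1.IsPrime := fun Q => (hmin Q).1.1
  -- avoidance elements
  have hu : ∀ Q : {Q // Q ∈ F}, ∃ u : S, u ∉ Q.1 ∧ ∀ Q' : {Q // Q ∈ F}, Q' ≠ Q → u ∈ Q'.1 := by
    intro Q
    have hq : ∀ Q' : {Q // Q ∈ F}, Q' ≠ Q → ∃ q : S, q ∈ Q'.1 ∧ q ∉ Q.1 := by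
      intro Q' hne'
      by_contra hcon
      push_neg at hcon
      have hle : Q'.1 ≤ Q.1 := fun z hz => hcon z hz
      have hge : Q.1 ≤ Q'.1 := (hmin Q).2 ⟨hprime Q', bot_le⟩ hle
      exact hne' (Subtype.ext (le_antisymm hle hge))
    choose q hq1 hq2 using hq
    refine ⟨∏ Q' ∈ (Finset.univ.erase Q).attach, q Q'.1 (Finset.ne_of_mem_erase Q'.2), ?_, ?_⟩
    · refine Finset.prod_induction _ (· ∉ Q.1)
        (fun x y hx hy hmem => ((hprime Q).mem_or_mem hmem).elim hx hy) ?_ ?_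
      · intro hmem
        exact (hprime Q).ne_top (Ideal.eq_top_of_isUnit_mem _ hmem isUnit_one)
      · intro Q' _
        exact hq2 Q'.1 (Finset.ne_of_mem_erase Q'.2)
    · intro Q'' hne''
      have hmem : Q'' ∈ Finset.univ.erase Q := Finset.mem_erase.mpr ⟨hne'', Finset.mem_univ _⟩
      have hatt : (⟨Q'', hmem⟩ : {x // x ∈ Finset.univ.erase Q}) ∈ (Finset.univ.erase Q).attach :=
        Finset.mem_attach _ _
      rw [← Finset.mul_prod_erase _ _ hatt]
      exact Ideal.mul_mem_right _ _ (hq1 Q'' hne'')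
  choose u hu1 hu2 using hu
  -- alignment
  set Λ' : ℕ := Λ₀ + ∑ Q, ΛQ Q with hΛ'
  set E' : ℕ := Λ' + e + ∑ Q, EQ Q with hE'
  have hΛle : ∀ Q : {Q // Q ∈ F}, ΛQ Q ≤ Λ' := by
    intro Q
    have := Finset.single_le_sum (f := ΛQ) (fun _ _ => Nat.zero_le _) (Finset.mem_univ Q)
    omega
  have hEle : ∀ Q : {Q // Q ∈ F}, EQ Q + (Λ' - ΛQ Q) ≤ E' := by
    intro Q
    have := Finset.single_le_sum (f := EQ) (fun _ _ => Nat.zero_le _) (Finset.mem_univ Q)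
    omega
  set sQ : {Q // Q ∈ F} → ℕ := fun Q => E' - (EQ Q + (Λ' - ΛQ Q)) with hsQ
  have hbid' : ∀ Q : {Q // Q ∈ F},
      IsBidegree p R S Λ' E' (fun r => u Q * (χQ Q r) ^ p ^ (sQ Q)) := by
    intro Q
    have h1 := ((hbid Q).shift (Λ' - ΛQ Q)).frobShift (sQ Q)
    have h2 : ΛQ Q + (Λ' - ΛQ Q) = Λ' := by have := hΛle Q; omega
    have h3 : EQ Q + (Λ' - ΛQ Q) + sQ Q = E' := by
      have h4 : sQ Q = E' - (EQ Q + (Λ' - ΛQ Q)) := by simp [hsQ]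
      have h5 := hEle Q
      omega
    rw [h2, h3] at h1
    exact h1.mulLeft (u Q)
  set ψfun : R → S := fun r => ∑ Q, u Q * (χQ Q r) ^ p ^ (sQ Q) with hψfun
  have hψbid : IsBidegree p R S Λ' E' ψfun := by
    intro r' r
    rw [hψfun]
    simp only
    rw [Finset.sum_congr rfl fun Q _ => hbid' Q r' r, ← Finset.mul_sum]
  have hψadd : ∀ r r', ψfun (r + r') = ψfun r + ψfun r' := by
    intro r r'
    rw [hψfun]
    simp only
    rw [← Finset.sum_add_distrib]
    refine Finset.sum_congr rfl fun Q _ => ?_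
    rw [map_add, add_pow_char_pow, mul_add]
  have hψc : ψfun c ∈ RCirc S := by
    intro P hP
    have hPF : P ∈ F := hfin.mem_toFinset.mpr hP
    set Q₀ : {Q // Q ∈ F} := ⟨P, hPF⟩ with hQ₀
    intro hmem
    have hrest : ∑ Q ∈ Finset.univ.erase Q₀, u Q * (χQ Q c) ^ p ^ (sQ Q) ∈ P := by
      refine Ideal.sum_mem _ fun Q hQmem => ?_
      have : u Q ∈ Q₀.1 := hu2 Q Q₀ (Finset.ne_of_mem_erase hQmem).symm
      exact Ideal.mul_mem_right _ _ this
    have hsplit : ψfun c = u Q₀ * (χQ Q₀ c) ^ p ^ (sQ Q₀)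
        + ∑ Q ∈ Finset.univ.erase Q₀, u Q * (χQ Q c) ^ p ^ (sQ Q) := by
      rw [hψfun]
      simp only
      rw [← Finset.add_sum_erase _ _ (Finset.mem_univ Q₀)]
    have hterm : u Q₀ * (χQ Q₀ c) ^ p ^ (sQ Q₀) ∈ P := by
      have := hmem
      rw [hsplit] at this
      simpa using Ideal.sub_mem _ this hrest
    rcases (hprime Q₀).mem_or_mem hterm with h | h
    · exact hu1 Q₀ h
    · exact hne Q₀ ((hprime Q₀).mem_of_pow_mem _ h)
  refine ⟨Λ', E', AddMonoidHom.mk' ψfun hψadd, by omega, by omega, hψbid, hψc⟩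

end Psi

end ITUE

set_option maxHeartbeats 1000000 in
/-- Proposition 6.5: for `R → S`, an `S`-module `M` and an `R`-module `L`,
`Σ_{e, φ} φ({}^e (M_{*S})) ⊆ L_{*R}`. -/
theorem interior_transforms_under_extensions
    (p : ℕ) [Fact p.Prime] (R : Type u) (S : Type v) [CommRing R] [CommRing S] [Algebra R S]
    [IsNoetherianRing R] [IsNoetherianRing S] [CharP R p] [CharP S p]
    (hffR : FFinite p (R ⧸ nilradical R)) (hffS : FFinite p (S ⧸ nilradical S))
    (M : Type w) [AddCommGroup M] [Module S M] (L : Type*) [AddCommGroup L] [Module R L]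
    (e : ℕ) (g : M →+ L) (hg : IsFrobSemilinearAlg p e R S M L g) :
    ∀ x ∈ tightInterior p S M, g x ∈ tightInterior p R L := by
  classical
  intro x hx
  have hFF : ∀ Λ, ITUE.FGen p R Λ := ITUE.fgen_all (ITUE.fgen_one_of_ffinite hffR)
  simp only [tightInterior] at hx ⊢
  rw [Submodule.mem_iInf]
  intro c
  rw [Submodule.mem_iInf]
  intro hc
  rw [Submodule.mem_iInf]
  intro e₀
  obtain ⟨Λ, E, ψ, hΛ₀, hEe, hψbid, hψc⟩ := ITUE.exists_psi (S := S) hFF hc e₀ e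
  have hx' : x ∈ tiAux p S M (ψ c) (E - e) := by
    have h1 := (Submodule.mem_iInf _).mp hx (ψ c)
    have h2 := (Submodule.mem_iInf _).mp h1 hψc
    exact (Submodule.mem_iInf _).mp h2 (E - e)
  have main : ∀ z ∈ Submodule.span S {m : M | ∃ e' : ℕ, E - e ≤ e' ∧
      ∃ h : S →+ M, IsFrobSemilinear p e' S h ∧ m = h (ψ c)},
      ∀ s : S, g (s • z) ∈ tiAux p R L c e₀ := by
    intro z hz
    induction hz using Submodule.span_induction with
    | mem z hzmem =>
      intro s
      obtain ⟨ez, hez, h, hsem, hzeq⟩ := hzmem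
      set t : ℕ := e + ez - E with ht
      have hEt : E + t = e + ez := by omega
      set G : R →+ L := AddMonoidHom.mk' (fun r => g (s • h (ψ r))) (fun r r' => by
        simp only [map_add, smul_add]) with hG
      have hGsem : IsFrobSemilinear p (Λ + t) R G := by
        intro r' r
        rw [hG]
        simp only [AddMonoidHom.mk'_apply]
        rw [smul_eq_mul]
        rw [(hψbid.shift t) r' r, hEt]
        have h2 : (algebraMap R S r') ^ p ^ (e + ez)
            = ((algebraMap R S r') ^ p ^ e) ^ p ^ ez := by
          rw [← pow_mul, ← pow_add]
        rw [h2, ← smul_eq_mul, hsem ((algebraMap R S r') ^ p ^ e) (ψ r)]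
        rw [smul_smul, mul_comm, ← smul_smul]
        exact hg r' (s • h (ψ r))
      refine Submodule.subset_span ⟨Λ + t, by omega, G, hGsem, ?_⟩
      rw [hG]
      simp only [AddMonoidHom.mk'_apply]
      rw [hzeq]
    | zero => intro s; simpa using Submodule.zero_mem _
    | add z₁ z₂ _ _ h₁ h₂ =>
      intro s
      rw [smul_add, map_add]
      exact Submodule.add_mem _ (h₁ s) (h₂ s)
    | smul σ z₁ _ h₁ =>
      intro s
      rw [smul_smul]
      exact h₁ (s * σ)
  have hfin := main x hx' 1
  simp only [one_smul] at hfin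
  exact hfin
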